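/- Let n ≥ 0 and let 0 < t_1 < t_2 < ⋯ < t_{n+1} be real numbers. Then the Vandermonde matrix V with entries V_{i,j} = t_i^{j−1}, 1 ≤ i, j ≤ n+1, is strictly totally positive: every minor of V, i.e., the determinant of every square submatrix obtained by choosing rows i_1 < ⋯ < i_r and columns j_1 < ⋯ < j_r, is strictly positive. -/

import Mathlib

open Finset Polynomial

/-- A nonzero real polynomial with `k` distinct positive roots has more than
`k` nonzero coefficients. -/
lemma poly_pos_roots : ∀ (k : ℕ) (p : ℝ[X]), p ≠ 0 →
    ∀ (x : Fin k → ℝ), StrictMono x → (∀ i, 0 < x i) →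
    (∀ i, p.eval (x i) = 0) → k < p.support.card := by
  intro k
  induction k with
  | zero =>
    intro p hp _ _ _ _
    simpa [Finset.card_pos, Polynomial.support_nonempty] using hp
  | succ k ih =>
    intro p hp x hx hxpos hroot
    set m := p.natTrailingDegree with hm
    have hdvd : X ^ m ∣ p := by
      rw [Polynomial.X_pow_dvd_iff]
      intro d hd
      exact Polynomial.coeff_eq_zero_of_lt_natTrailingDegree hd
    obtain ⟨q, hq⟩ := hdvd
    have hq0 : q ≠ 0 := by rintro rfl; simp at hq; exact hp hq
    have hqc0 : q.coeff 0 ≠ 0 := by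
      have : p.coeff m = q.coeff 0 := by
        have := Polynomial.coeff_X_pow_mul q m 0
        simpa [hq] using this
      rw [← this]
      exact Polynomial.trailingCoeff_nonzero_iff_nonzero.mpr hp
    -- roots of q
    have hqroot : ∀ i, q.eval (x i) = 0 := by
      intro i
      have := hroot i
      rw [hq] at this
      simp only [Polynomial.eval_mul, Polynomial.eval_pow, Polynomial.eval_X] at this
      rcases mul_eq_zero.mp this with h | h
      · exact absurd h (pow_ne_zero _ (ne_of_gt (hxpos i)))
      · exact h
    -- derivative is nonzero
    have hd0 : Polynomial.derivative q ≠ 0 := by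
      intro h
      have := Polynomial.eq_C_of_natDegree_eq_zero
        (Polynomial.natDegree_eq_zero_of_derivative_eq_zero h)
      have h0 := hqroot 0
      rw [this] at h0
      simp at h0
      exact hqc0 (by rw [this]; simpa using h0)
    -- Rolle: k roots of derivative
    have hroll : ∀ i : Fin k, ∃ c, x i.castSucc < c ∧ c < x i.succ ∧
        (Polynomial.derivative q).eval c = 0 := by
      intro i
      have hlt : x i.castSucc < x i.succ := hx Fin.castSucc_lt_succ
      obtain ⟨c, hc, hc'⟩ := exists_deriv_eq_zero (f := fun s => q.eval s) hlt
        ((Polynomial.continuous q).continuousOn)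
        (by show q.eval _ = q.eval _; rw [hqroot, hqroot])
      refine ⟨c, hc.1, hc.2, ?_⟩
      rwa [Polynomial.deriv] at hc'
    choose y hy1 hy2 hy3 using hroll
    have hymono : StrictMono y := by
      intro i j hij
      have h1 : x i.succ ≤ x j.castSucc := by
        apply hx.monotone
        rw [Fin.lt_def] at hij
        rw [Fin.le_def, Fin.val_succ, Fin.coe_castSucc]
        omega
      exact lt_of_lt_of_le (hy2 i) (le_trans h1 (le_of_lt (hy1 j)))
    have hypos : ∀ i, 0 < y i := fun i => lt_trans (hxpos i.castSucc) (hy1 i)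
    have hkey := ih (Polynomial.derivative q) hd0 y hymono hypos hy3
    -- support card comparisons
    have hc1 : (Polynomial.derivative q).support.card + 1 ≤ q.support.card := by
      have hsub : (Polynomial.derivative q).support ⊆
          (q.support.erase 0).image (· - 1) := by
        intro n hn
        rw [Polynomial.mem_support_iff, Polynomial.coeff_derivative] at hn
        have : q.coeff (n + 1) ≠ 0 := fun h => hn (by simp [h])
        apply Finset.mem_image.mpr
        exact ⟨n + 1, Finset.mem_erase.mpr ⟨by omega, Polynomial.mem_support_iff.mpr this⟩,
          by omega⟩
      have h1 : (Polynomial.derivative q).support.card ≤ (q.support.erase 0).card :=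
        le_trans (Finset.card_le_card hsub) (Finset.card_image_le)
      have h2 : 0 ∈ q.support := Polynomial.mem_support_iff.mpr hqc0
      have := Finset.card_erase_of_mem h2
      omega
    have hc2 : q.support.card ≤ p.support.card := by
      apply Finset.card_le_card_of_injOn (· + m)
      · intro n hn
        rw [Finset.mem_coe] at hn ⊢
        rw [Polynomial.mem_support_iff] at hn ⊢
        rw [hq]
        rwa [Polynomial.coeff_X_pow_mul]
      · intro a _ b _ h
        simp only at h
        omega
    omega

/-- det of a generalized Vandermonde matrix with increasing positive nodes and
increasing exponents is positive. -/
lemma genVdm_pos : ∀ (r : ℕ) (x : Fin r → ℝ) (e : Fin r → ℕ),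
    StrictMono x → (∀ i, 0 < x i) → StrictMono e →
    0 < (Matrix.of fun i j => x i ^ e j).det := by
  intro r
  induction r with
  | zero => intro x e _ _ _; simp [Matrix.det_isEmpty]
  | succ r ih =>
    intro x e hx hxpos he
    set M : Matrix (Fin (r+1)) (Fin (r+1)) ℝ := Matrix.of fun i j => x i ^ e j with hM
    rcases Nat.eq_zero_or_pos r with hr | hr
    · subst hr
      have : M.det = x 0 ^ e 0 := by
        rw [Matrix.det_fin_one]; rfl
      rw [this]
      exact pow_pos (hxpos 0) _
    -- cofactors along the last row
    set c : Fin (r+1) → ℝ := fun j =>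
      (-1 : ℝ) ^ (r + (j : ℕ)) * (M.submatrix Fin.castSucc j.succAbove).det with hc
    set P : ℝ[X] := ∑ j : Fin (r+1), C (c j) * X ^ (e j) with hP
    -- evaluation formula
    have heval : ∀ s : ℝ,
        P.eval s = (Matrix.of fun i j =>
          (if i = Fin.last r then s else x i) ^ e j).det := by
      intro s
      set N : Matrix (Fin (r+1)) (Fin (r+1)) ℝ :=
        Matrix.of fun i j => (if i = Fin.last r then s else x i) ^ e j with hN
      rw [Matrix.det_succ_row N (Fin.last r)]
      rw [hP]
      rw [Polynomial.eval_finset_sum]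
      apply Finset.sum_congr rfl
      intro j _
      have hsub : N.submatrix (Fin.last r).succAbove j.succAbove =
          M.submatrix Fin.castSucc j.succAbove := by
        ext a b
        simp only [Matrix.submatrix_apply, hN, hM, Fin.succAbove_last, Matrix.of_apply]
        rw [if_neg (Fin.ne_of_lt (Fin.castSucc_lt_last a))]
      rw [hsub]
      simp only [Polynomial.eval_mul, Polynomial.eval_C, Polynomial.eval_pow,
        Polynomial.eval_X, hc, hN, Fin.val_last, Matrix.of_apply, if_pos rfl,
        eq_self_iff_true, if_true]
      ring
    -- roots at the first r nodes
    have hroots : ∀ i : Fin r, P.eval (x i.castSucc) = 0 := by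
      intro i
      rw [heval]
      apply Matrix.det_zero_of_row_eq (i := i.castSucc) (j := Fin.last r)
        (Fin.ne_of_lt (Fin.castSucc_lt_last i))
      funext b
      simp [Fin.ne_of_lt (Fin.castSucc_lt_last i)]
    -- det M as evaluation at x last
    have hdetM : P.eval (x (Fin.last r)) = M.det := by
      rw [heval]
      congr 1
      ext a b
      simp only [Matrix.of_apply, hM]
      congr 1
      split <;> simp_all
    -- coefficient at top exponent
    have hclast : c (Fin.last r) =
        (M.submatrix Fin.castSucc (Fin.last r).succAbove).det := by
      rw [hc]
      simp only [Fin.val_last]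
      rw [← two_mul, pow_mul, neg_one_sq, one_pow, one_mul]
    have hminor : 0 < (M.submatrix Fin.castSucc (Fin.last r).succAbove).det := by
      have : M.submatrix Fin.castSucc (Fin.last r).succAbove =
          Matrix.of (fun i j : Fin r => (x i.castSucc) ^ (e j.castSucc)) := by
        ext a b
        simp [hM, Fin.succAbove_last]
      rw [this]
      exact ih _ _ (fun a b hab => hx (by simpa using hab)) (fun i => hxpos _)
        (fun a b hab => he (by simpa using hab))
    have hcoeff : P.coeff (e (Fin.last r)) = c (Fin.last r) := by
      rw [hP, Polynomial.finset_sum_coeff]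
      rw [Finset.sum_eq_single (Fin.last r)]
      · simp
      · intro j _ hj
        rw [Polynomial.coeff_C_mul, Polynomial.coeff_X_pow]
        rw [if_neg (fun h => hj (he.injective h.symm))]
        ring
      · simp
    have hcoeffpos : 0 < P.coeff (e (Fin.last r)) := by
      rw [hcoeff, hclast]; exact hminor
    have hPne : P ≠ 0 := fun h => by simp [h] at hcoeffpos
    -- natDegree and leading coefficient
    have hndle : P.natDegree ≤ e (Fin.last r) := by
      rw [hP]
      apply Polynomial.natDegree_sum_le_of_forall_le
      intro j _
      calc (C (c j) * X ^ e j).natDegree ≤ (X ^ e j : ℝ[X]).natDegree :=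
            Polynomial.natDegree_C_mul_le _ _
        _ = e j := Polynomial.natDegree_X_pow _
        _ ≤ e (Fin.last r) := he.monotone (Fin.le_last j)
    have hnd : P.natDegree = e (Fin.last r) :=
      le_antisymm hndle (Polynomial.le_natDegree_of_ne_zero (ne_of_gt hcoeffpos))
    have hlead : 0 < P.leadingCoeff := by
      rw [Polynomial.leadingCoeff, hnd]; exact hcoeffpos
    -- support card bound
    have hsupp : P.support.card ≤ r + 1 := by
      have hsub : P.support ⊆ Finset.image e Finset.univ := by
        intro m hm
        rw [Polynomial.mem_support_iff] at hm
        by_contra hmem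
        apply hm
        rw [hP, Polynomial.finset_sum_coeff]
        apply Finset.sum_eq_zero
        intro j _
        rw [Polynomial.coeff_C_mul, Polynomial.coeff_X_pow, if_neg, mul_zero]
        intro h
        exact hmem (Finset.mem_image.mpr ⟨j, Finset.mem_univ _, h.symm⟩)
      calc P.support.card ≤ (Finset.image e Finset.univ).card :=
            Finset.card_le_card hsub
        _ ≤ Finset.univ.card := Finset.card_image_le
        _ = r + 1 := by simp
    -- degree positive (since r ≥ 1)
    have helast : r ≤ e (Fin.last r) := by
      have key : ∀ m : ℕ, ∀ h : m < r + 1, m ≤ e ⟨m, h⟩ := by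
        intro m
        induction m with
        | zero => intro _; omega
        | succ m ihm =>
          intro h
          have h' : m < r + 1 := by omega
          have h1 := he (a := ⟨m, h'⟩) (b := ⟨m+1, h⟩) (by rw [Fin.lt_def]; simp)
          have h2 := ihm h'
          omega
      exact key r (by omega)
    by_contra hcon
    push_neg at hcon
    rcases lt_or_eq_of_le hcon with hlt | heq
    · -- det M < 0 : find a root beyond x last, get r+1 roots
      have hdegpos : 0 < P.degree := by
        rw [Polynomial.degree_eq_natDegree hPne, hnd]
        exact_mod_cast lt_of_lt_of_le hr helast
      have htend := Polynomial.tendsto_atTop_of_leadingCoeff_nonneg P hdegpos hlead.le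
      have hev : ∀ᶠ s in Filter.atTop, 0 < P.eval s ∧ x (Fin.last r) < s := by
        filter_upwards [htend.eventually_gt_atTop 0,
          Filter.eventually_gt_atTop (x (Fin.last r))] with s h1 h2
        exact ⟨h1, h2⟩
      obtain ⟨B, hB⟩ := hev.exists
      have hivt : (0 : ℝ) ∈ Set.Ioo (P.eval (x (Fin.last r))) (P.eval B) := by
        constructor
        · rw [hdetM]; exact hlt
        · exact hB.1
      obtain ⟨ξ, hξmem, hξ⟩ := intermediate_value_Ioo hB.2.le
        (P.continuous_aeval.continuousOn (s := Set.Icc (x (Fin.last r)) B)) hivt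
      -- r+1 roots : x 0 .. x (r-1), ξ
      set z : Fin (r+1) → ℝ := fun i =>
        if h : (i : ℕ) < r then x ⟨i, by omega⟩ else ξ with hz
      have hzmono : StrictMono z := by
        intro a b hab
        rw [Fin.lt_def] at hab
        by_cases hb : (b : ℕ) < r
        · have ha : (a : ℕ) < r := by omega
          rw [hz]; simp only [dif_pos ha, dif_pos hb]
          exact hx (by rw [Fin.lt_def]; exact hab)
        · have ha : (a : ℕ) < r := by omega
          rw [hz]; simp only [dif_pos ha, dif_neg hb]
          have : x ⟨a, by omega⟩ ≤ x (Fin.last r) := hx.monotone (by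
            rw [Fin.le_def]; simp; omega)
          exact lt_of_le_of_lt this hξmem.1
      have hzpos : ∀ i, 0 < z i := by
        intro i
        rw [hz]
        by_cases h : (i : ℕ) < r
        · simp only [dif_pos h]; exact hxpos _
        · simp only [dif_neg h]
          exact lt_trans (hxpos (Fin.last r)) hξmem.1
      have hzroot : ∀ i, P.eval (z i) = 0 := by
        intro i
        rw [hz]
        by_cases h : (i : ℕ) < r
        · simp only [dif_pos h]
          have := hroots ⟨i, h⟩
          convert this using 2
          exact congrArg x (Fin.ext rfl)
        · simp only [dif_neg h]; exact hξ
      have := poly_pos_roots (r+1) P hPne z hzmono hzpos hzroot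
      omega
    · -- det M = 0 : x itself gives r+1 roots
      have hzroot : ∀ i : Fin (r+1), P.eval (x i) = 0 := by
        intro i
        by_cases h : (i : ℕ) < r
        · have := hroots ⟨i, h⟩
          convert this using 2
          exact congrArg x (Fin.ext rfl)
        · have : i = Fin.last r := by
            rw [Fin.ext_iff]; simp; omega
          rw [this, hdetM]; exact heq
      have := poly_pos_roots (r+1) P hPne x hx hxpos hzroot
      omega

theorem vandermonde_strictly_totally_positive
    (n : ℕ) (t : ℕ → ℝ)
    (hpos : 0 < t 1)
    (ht : ∀ i j, 1 ≤ i → i < j → j ≤ n + 1 → t i < t j)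
    (V : Matrix (Fin (n + 1)) (Fin (n + 1)) ℝ)
    (hV : ∀ i j, V i j = (t (i.val + 1)) ^ j.val) :
    ∀ (r : ℕ) (f g : Fin r → Fin (n + 1)), StrictMono f → StrictMono g →
      0 < (V.submatrix f g).det := by
  intro r f g hf hg
  have hx : StrictMono (fun i : Fin r => t ((f i : ℕ) + 1)) := by
    intro a b hab
    have h1 : (f a : ℕ) < (f b : ℕ) := hf hab
    exact ht _ _ (by omega) (by omega) (by have := (f b).isLt; omega)
  have hxpos : ∀ i : Fin r, 0 < t ((f i : ℕ) + 1) := by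
    intro i
    rcases Nat.eq_zero_or_pos (f i : ℕ) with h | h
    · rw [h]; exact hpos
    · exact lt_trans hpos (ht 1 _ le_rfl (by omega) (by have := (f i).isLt; omega))
  have he : StrictMono (fun j : Fin r => (g j : ℕ)) := fun a b hab => hg hab
  have := genVdm_pos r (fun i => t ((f i : ℕ) + 1)) (fun j => (g j : ℕ)) hx hxpos he
  convert this using 2
  ext i j
  simp [hV, Matrix.submatrix_apply]
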